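/- If γ is not a nonpositive integer and γ - α - β > 0, then the limit of F(α,β;γ;z) as z → 1⁻ equals Γ(γ)Γ(γ-α-β) / (Γ(γ-α)Γ(γ-β)). -/

import Mathlib

open Real Filter MeasureTheory
open scoped Topology

/-- The Gauss hypergeometric function `F(α, β; γ; z)`, defined by its power series. -/
noncomputable def hypF (α β γ z : ℝ) : ℝ :=
  ∑' i : ℕ, ((ascPochhammer ℝ i).eval α * (ascPochhammer ℝ i).eval β /
      (ascPochhammer ℝ i).eval γ) * z ^ i / (Nat.factorial i)

/-- coefficient of the hypergeometric series -/
noncomputable def hcoef (α β γ : ℝ) (n : ℕ) : ℝ :=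
  (ascPochhammer ℝ n).eval α * (ascPochhammer ℝ n).eval β /
    (ascPochhammer ℝ n).eval γ / (Nat.factorial n)

lemma poch_prod (x : ℝ) (n : ℕ) :
    (ascPochhammer ℝ n).eval x = ∏ j ∈ Finset.range n, (x + j) := by
  induction n with
  | zero => simp
  | succ n ih => rw [ascPochhammer_succ_eval, Finset.prod_range_succ, ih]

lemma poch_ne_zero {x : ℝ} (hx : ∀ m : ℕ, x ≠ -m) (n : ℕ) :
    (ascPochhammer ℝ n).eval x ≠ 0 := by
  rw [Ne, ascPochhammer_eval_eq_zero_iff]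
  rintro ⟨k, -, hk⟩
  exact hx k (by linarith [hk])

lemma poch_pos {x : ℝ} (hx : 0 < x) (n : ℕ) : 0 < (ascPochhammer ℝ n).eval x :=
  ascPochhammer_pos n x hx

lemma hcoef_zero (α β γ : ℝ) : hcoef α β γ 0 = 1 := by
  simp [hcoef]

lemma poch_eval_neg_nat {x : ℝ} {k : ℕ} (hx : x = -k) {n : ℕ} (hn : k < n) :
    (ascPochhammer ℝ n).eval x = 0 := by
  rw [ascPochhammer_eval_eq_zero_iff]
  exact ⟨k, hn, by rw [hx, neg_neg]⟩

lemma hcoef_gammaSeq (α β γ : ℝ) (hα : ∀ m : ℕ, α ≠ -m) (hβ : ∀ m : ℕ, β ≠ -m)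
    (hγ : ∀ m : ℕ, γ ≠ -m) {n : ℕ} (hn : 0 < n) :
    ((n : ℝ) + 1) * hcoef α β γ (n + 1) =
      (n : ℝ) ^ (α + β - γ) * (Real.GammaSeq γ n / (Real.GammaSeq α n * Real.GammaSeq β n)) := by
  have hnR : (0:ℝ) < n := by exact_mod_cast hn
  have hA := poch_ne_zero hα (n+1)
  have hB := poch_ne_zero hβ (n+1)
  have hC := poch_ne_zero hγ (n+1)
  have hfac : ((n.factorial : ℝ)) ≠ 0 := by exact_mod_cast n.factorial_ne_zero
  have ha' : ((n:ℝ)) ^ α ≠ 0 := (Real.rpow_pos_of_pos hnR α).ne'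
  have hb' : ((n:ℝ)) ^ β ≠ 0 := (Real.rpow_pos_of_pos hnR β).ne'
  have hc' : ((n:ℝ)) ^ γ ≠ 0 := (Real.rpow_pos_of_pos hnR γ).ne'
  have hpow_eq : (n : ℝ) ^ (α + β - γ) = (n:ℝ)^α * (n:ℝ)^β / (n:ℝ)^γ := by
    rw [Real.rpow_sub hnR, Real.rpow_add hnR]
  rw [Real.GammaSeq, Real.GammaSeq, Real.GammaSeq, ← poch_prod, ← poch_prod, ← poch_prod,
    hpow_eq]
  unfold hcoef
  rw [Nat.factorial_succ]
  push_cast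
  field_simp

lemma hcoef_decay_of_vanish (α β γ : ℝ) (k : ℕ) (hz : ∀ n, k < n → hcoef α β γ n = 0) :
    Tendsto (fun n : ℕ => (n:ℝ) * hcoef α β γ n) atTop (𝓝 0) ∧
      Summable (fun n => |hcoef α β γ n|) := by
  constructor
  · apply Tendsto.congr' _ (tendsto_const_nhds (x := (0:ℝ)))
    filter_upwards [eventually_gt_atTop k] with n hn
    rw [hz n hn, mul_zero]
  · apply summable_of_ne_finset_zero (s := Finset.range (k+1))
    intro n hn
    rw [hz n (by simpa using hn), abs_zero]

lemma hcoef_decay (α β γ : ℝ) (hγ : ∀ m : ℕ, γ ≠ -m) (h : 0 < γ - α - β) :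
    Tendsto (fun n : ℕ => (n:ℝ) * hcoef α β γ n) atTop (𝓝 0) ∧
      Summable (fun n => |hcoef α β γ n|) := by
  by_cases hα : ∀ m : ℕ, α ≠ -m
  · by_cases hβ : ∀ m : ℕ, β ≠ -m
    · -- main case
      set L := Real.Gamma γ / (Real.Gamma α * Real.Gamma β) with hL
      have hrt : Tendsto (fun n : ℕ => Real.GammaSeq γ n / (Real.GammaSeq α n * Real.GammaSeq β n)) atTop (𝓝 L) :=
        (Real.GammaSeq_tendsto_Gamma γ).div
          ((Real.GammaSeq_tendsto_Gamma α).mul (Real.GammaSeq_tendsto_Gamma β))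
          (mul_ne_zero (Real.Gamma_ne_zero hα) (Real.Gamma_ne_zero hβ))
      have hpow : Tendsto (fun n : ℕ => (n:ℝ) ^ (α + β - γ)) atTop (𝓝 0) := by
        have he : α + β - γ = -(γ - α - β) := by ring
        rw [he]
        exact (tendsto_rpow_neg_atTop h).comp tendsto_natCast_atTop_atTop
      have hg : Tendsto (fun n : ℕ => (n:ℝ) ^ (α + β - γ) *
          (Real.GammaSeq γ n / (Real.GammaSeq α n * Real.GammaSeq β n))) atTop (𝓝 0) := by
        simpa using hpow.mul hrt
      have key : ∀ᶠ n : ℕ in atTop,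
          (fun n : ℕ => (n:ℝ) ^ (α + β - γ) *
            (Real.GammaSeq γ n / (Real.GammaSeq α n * Real.GammaSeq β n))) n =
            (fun n : ℕ => ((n:ℝ) + 1) * hcoef α β γ (n+1)) n := by
        filter_upwards [eventually_gt_atTop 0] with n hn
        exact (hcoef_gammaSeq α β γ hα hβ hγ hn).symm
      have h1 : Tendsto (fun n : ℕ => ((n:ℝ)+1) * hcoef α β γ (n+1)) atTop (𝓝 0) :=
        hg.congr' key
      constructor
      · rw [← tendsto_add_atTop_iff_nat 1]
        apply h1.congr
        intro n; push_cast; ring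
      · rw [← summable_nat_add_iff 1]
        have hrb : ∀ᶠ n : ℕ in atTop,
            |Real.GammaSeq γ n / (Real.GammaSeq α n * Real.GammaSeq β n)| ≤ |L| + 1 :=
          (hrt.abs).eventually (eventually_le_nhds (lt_add_one |L|))
        apply summable_of_isBigO_nat
          (g := fun n : ℕ => (n:ℝ) ^ (α + β - γ - 1))
          (Real.summable_nat_rpow.mpr (by linarith))
        apply Asymptotics.IsBigO.of_bound (|L| + 1)
        filter_upwards [hrb, eventually_gt_atTop 0] with n hrn hn
        have hnR : (0:ℝ) < n := by exact_mod_cast hn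
        have hid := hcoef_gammaSeq α β γ hα hβ hγ hn
        have hne : ((n:ℝ) + 1) ≠ 0 := by positivity
        set R := Real.GammaSeq γ n / (Real.GammaSeq α n * Real.GammaSeq β n) with hR
        have hco : hcoef α β γ (n+1) = (n:ℝ) ^ (α + β - γ) * R / ((n:ℝ)+1) := by
          rw [eq_div_iff hne]
          linear_combination hid
        rw [hco]
        have h1' : |(n:ℝ) ^ (α + β - γ) * R / ((n:ℝ)+1)| ≤
            (n:ℝ) ^ (α + β - γ) * (|L| + 1) / (n:ℝ) := by
          rw [abs_div, abs_mul, abs_of_pos (by positivity : (0:ℝ) < (n:ℝ)+1),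
            abs_of_pos (Real.rpow_pos_of_pos hnR _)]
          apply div_le_div₀ (by positivity)
            (mul_le_mul_of_nonneg_left hrn (Real.rpow_pos_of_pos hnR _).le) hnR
          linarith
        have h2'' : (n:ℝ) ^ (α + β - γ - 1) = (n:ℝ) ^ (α + β - γ) / (n:ℝ) := by
          rw [Real.rpow_sub hnR, Real.rpow_one]
        have h2' : (n:ℝ) ^ (α + β - γ) * (|L| + 1) / (n:ℝ) =
            (|L| + 1) * (n:ℝ) ^ (α + β - γ - 1) := by
          rw [h2'']; ring
        rw [norm_eq_abs, abs_abs, norm_eq_abs,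
          abs_of_pos (Real.rpow_pos_of_pos hnR (α + β - γ - 1))]
        calc |(n:ℝ) ^ (α + β - γ) * R / ((n:ℝ)+1)| ≤
            (n:ℝ) ^ (α + β - γ) * (|L| + 1) / (n:ℝ) := h1'
          _ = (|L| + 1) * (n:ℝ) ^ (α + β - γ - 1) := h2'
    · push_neg at hβ
      obtain ⟨k, hk⟩ := hβ
      apply hcoef_decay_of_vanish α β γ k
      intro n hn
      unfold hcoef
      rw [poch_eval_neg_nat hk hn, mul_zero, zero_div, zero_div]
  · push_neg at hα
    obtain ⟨k, hk⟩ := hα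
    apply hcoef_decay_of_vanish α β γ k
    intro n hn
    unfold hcoef
    rw [poch_eval_neg_nat hk hn, zero_mul, zero_div, zero_div]

noncomputable def hsum (α β γ : ℝ) : ℝ := ∑' n : ℕ, hcoef α β γ n

lemma poch_succ_left_eval (x : ℝ) (n : ℕ) :
    (ascPochhammer ℝ (n+1)).eval x = x * (ascPochhammer ℝ n).eval (x+1) := by
  rw [ascPochhammer_succ_left, Polynomial.eval_mul, Polynomial.eval_X, Polynomial.eval_comp,
    Polynomial.eval_add, Polynomial.eval_X, Polynomial.eval_one]

lemma shift_not_neg_nat {γ : ℝ} (hγ : ∀ m : ℕ, γ ≠ -m) (k : ℕ) :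
    ∀ m : ℕ, γ + k ≠ -m := by
  intro m hc
  exact hγ (m + k) (by push_cast; linarith)

lemma hsum_contig (α β γ : ℝ) (hγ : ∀ m : ℕ, γ ≠ -m) (h : 0 < γ - α - β) :
    γ * (γ - α - β) * hsum α β γ = (γ - α) * (γ - β) * hsum α β (γ + 1) := by
  have hγ1 : ∀ m : ℕ, γ + 1 ≠ -m := by
    have := shift_not_neg_nat hγ 1; push_cast at this; exact this
  have h1 : 0 < (γ + 1) - α - β := by linarith
  obtain ⟨hten, habs⟩ := hcoef_decay α β γ hγ h
  obtain ⟨-, habs1⟩ := hcoef_decay α β (γ+1) hγ1 h1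
  have hs : Summable (hcoef α β γ) := habs.of_abs
  have hs1 : Summable (hcoef α β (γ+1)) := habs1.of_abs
  have hγ0 : γ ≠ 0 := by simpa using hγ 0
  -- termwise telescoping identity
  have hd : ∀ n : ℕ,
      γ * (γ - α - β) * hcoef α β γ n - (γ - α) * (γ - β) * hcoef α β (γ+1) n
        = γ * n * hcoef α β γ n - γ * (n+1) * hcoef α β γ (n+1) := by
    intro n
    have hC := poch_ne_zero hγ n
    have hγn : γ + (n:ℝ) ≠ 0 := fun hc => hγ n (by linarith)
    have hfac : ((n.factorial : ℝ)) ≠ 0 := by exact_mod_cast n.factorial_ne_zero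
    have e1 : (ascPochhammer ℝ (n+1)).eval γ = (ascPochhammer ℝ n).eval γ * (γ + n) :=
      ascPochhammer_succ_eval n γ
    have e2 : (ascPochhammer ℝ n).eval (γ+1) = (ascPochhammer ℝ n).eval γ * (γ + n) / γ := by
      rw [eq_div_iff hγ0]
      have := poch_succ_left_eval γ n
      rw [this] at e1
      linarith [e1]
    have e3 : (ascPochhammer ℝ (n+1)).eval α = (ascPochhammer ℝ n).eval α * (α + n) :=
      ascPochhammer_succ_eval n α
    have e4 : (ascPochhammer ℝ (n+1)).eval β = (ascPochhammer ℝ n).eval β * (β + n) :=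
      ascPochhammer_succ_eval n β
    unfold hcoef
    rw [e1, e2, e3, e4, Nat.factorial_succ]
    push_cast
    field_simp
    ring
  -- partial sums telescope
  have hps : ∀ N : ℕ, ∑ i ∈ Finset.range N,
      (γ * (γ - α - β) * hcoef α β γ i - (γ - α) * (γ - β) * hcoef α β (γ+1) i)
        = - (γ * N * hcoef α β γ N) := by
    intro N
    have : ∀ i ∈ Finset.range N,
        (γ * (γ - α - β) * hcoef α β γ i - (γ - α) * (γ - β) * hcoef α β (γ+1) i)
          = (fun i : ℕ => γ * i * hcoef α β γ i) i - (fun i : ℕ => γ * i * hcoef α β γ i) (i+1) := by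
      intro i _
      simpa using hd i
    rw [Finset.sum_congr rfl this, Finset.sum_range_sub' (fun i : ℕ => γ * i * hcoef α β γ i)]
    simp
  -- the difference series sums to 0
  have hsd : Summable (fun n : ℕ =>
      γ * (γ - α - β) * hcoef α β γ n - (γ - α) * (γ - β) * hcoef α β (γ+1) n) :=
    (hs.mul_left _).sub (hs1.mul_left _)
  have ht0 : Tendsto (fun N : ℕ => - (γ * N * hcoef α β γ N)) atTop (𝓝 0) := by
    have := (hten.const_mul γ).neg
    simp only [neg_zero, mul_zero] at this ⊢
    apply this.congr
    intro n; ring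
  have hps_t := hsd.hasSum.tendsto_sum_nat
  have : (∑' n : ℕ,
      (γ * (γ - α - β) * hcoef α β γ n - (γ - α) * (γ - β) * hcoef α β (γ+1) n)) = 0 := by
    apply tendsto_nhds_unique hps_t
    apply ht0.congr
    intro N
    exact (hps N).symm
  rw [Summable.tsum_sub (hs.mul_left (γ * (γ - α - β))) (hs1.mul_left ((γ - α) * (γ - β))),
    tsum_mul_left, tsum_mul_left] at this
  have h2 : γ * (γ - α - β) * hsum α β γ - (γ - α) * (γ - β) * hsum α β (γ+1) = 0 := this
  linarith

lemma hsum_iter (α β γ : ℝ) (hγ : ∀ m : ℕ, γ ≠ -m) (h : 0 < γ - α - β) (m : ℕ) :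
    hsum α β γ * ((ascPochhammer ℝ m).eval γ * (ascPochhammer ℝ m).eval (γ - α - β)) =
      hsum α β (γ + m) * ((ascPochhammer ℝ m).eval (γ - α) * (ascPochhammer ℝ m).eval (γ - β)) := by
  induction m with
  | zero => simp
  | succ m ih =>
    have hγm : ∀ j : ℕ, γ + m ≠ -j := shift_not_neg_nat hγ m
    have hm : 0 < (γ + m) - α - β := by
      have : (0:ℝ) ≤ m := Nat.cast_nonneg m
      linarith
    have hc := hsum_contig α β (γ + m) hγm hm
    rw [ascPochhammer_succ_eval, ascPochhammer_succ_eval, ascPochhammer_succ_eval,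
      ascPochhammer_succ_eval]
    push_cast
    rw [show γ + ((m:ℝ) + 1) = (γ + m) + 1 by ring]
    linear_combination ((γ + (m:ℝ)) * ((γ - α - β) + m)) * ih +
      ((ascPochhammer ℝ m).eval (γ - α) * (ascPochhammer ℝ m).eval (γ - β)) * hc

lemma poch_mono_shift {x y : ℝ} (hx : 0 ≤ x) (hxy : x ≤ y) (n : ℕ) :
    (ascPochhammer ℝ n).eval x ≤ (ascPochhammer ℝ n).eval y := by
  rw [poch_prod, poch_prod]
  apply Finset.prod_le_prod
  · intro j _
    have : (0:ℝ) ≤ j := Nat.cast_nonneg j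
    linarith
  · intro j _
    linarith

set_option maxHeartbeats 1000000 in
lemma hsum_shift_tendsto_one (α β γ : ℝ) (hγ : ∀ m : ℕ, γ ≠ -m) (h : 0 < γ - α - β) :
    Tendsto (fun m : ℕ => hsum α β (γ + m)) atTop (𝓝 1) := by
  obtain ⟨m₀, hm₀⟩ := exists_nat_ge (1 - γ)
  have h1 : (1:ℝ) ≤ γ + m₀ := by linarith
  have hγ₀ : ∀ j : ℕ, γ + m₀ ≠ -j := shift_not_neg_nat hγ m₀
  have h0' : 0 < (γ + m₀) - α - β := by
    have : (0:ℝ) ≤ m₀ := Nat.cast_nonneg m₀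
    linarith
  obtain ⟨-, habs₀⟩ := hcoef_decay α β (γ + m₀) hγ₀ h0'
  have habs₀' : Summable (fun n : ℕ => |hcoef α β (γ + m₀) (n+1)|) :=
    (summable_nat_add_iff 1).mpr habs₀
  -- limit of the bounding function
  have hg : Tendsto (fun m : ℕ => ((γ + m₀) * (∑' n : ℕ, |hcoef α β (γ + m₀) (n+1)|)) * (γ + (m:ℝ))⁻¹) atTop (𝓝 0) := by
    have h2 : Tendsto (fun m : ℕ => γ + (m:ℝ)) atTop atTop :=
      tendsto_atTop_add_const_left _ γ tendsto_natCast_atTop_atTop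
    simpa using (h2.inv_tendsto_atTop).const_mul ((γ + m₀) * (∑' n : ℕ, |hcoef α β (γ + m₀) (n+1)|))
  -- eventual bound
  have hbound : ∀ᶠ m : ℕ in atTop, ‖hsum α β (γ + m) - 1‖ ≤ ((γ + m₀) * (∑' n : ℕ, |hcoef α β (γ + m₀) (n+1)|)) * (γ + (m:ℝ))⁻¹ := by
    filter_upwards [eventually_ge_atTop m₀] with m hm
    have hmm : (m₀:ℝ) ≤ m := Nat.cast_le.mpr hm
    have hpos_m : (0:ℝ) < γ + m := by linarith
    have hpos_m₀ : (0:ℝ) < γ + m₀ := by linarith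
    have hγm : ∀ j : ℕ, γ + m ≠ -j := shift_not_neg_nat hγ m
    have hm' : 0 < (γ + m) - α - β := by linarith
    obtain ⟨-, habsm⟩ := hcoef_decay α β (γ + m) hγm hm'
    have habsm' : Summable (fun n : ℕ => |hcoef α β (γ + m) (n+1)|) :=
      (summable_nat_add_iff 1).mpr habsm
    have hsm : Summable (hcoef α β (γ + m)) := habsm.of_abs
    -- pointwise tail comparison
    have hptw : ∀ n : ℕ, |hcoef α β (γ + m) (n+1)| ≤
        (γ + m₀) / (γ + m) * |hcoef α β (γ + m₀) (n+1)| := by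
      intro n
      have hPm : 0 < (ascPochhammer ℝ (n+1)).eval (γ + m) := poch_pos hpos_m _
      have hPm₀ : 0 < (ascPochhammer ℝ (n+1)).eval (γ + m₀) := poch_pos hpos_m₀ _
      have hmono : (ascPochhammer ℝ n).eval (γ + m₀ + 1) ≤
          (ascPochhammer ℝ n).eval (γ + m + 1) :=
        poch_mono_shift (by linarith) (by linarith) n
      have hcomp : (γ + (m:ℝ)) * (ascPochhammer ℝ (n+1)).eval (γ + m₀) ≤
          (γ + (m₀:ℝ)) * (ascPochhammer ℝ (n+1)).eval (γ + m) := by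
        rw [poch_succ_left_eval, poch_succ_left_eval]
        have h2 := mul_le_mul_of_nonneg_left hmono
          (mul_nonneg (le_of_lt hpos_m) (le_of_lt hpos_m₀))
        nlinarith [h2]
      have hfrac : 1 / (ascPochhammer ℝ (n+1)).eval (γ + m) ≤
          ((γ + m₀) / (γ + m)) / (ascPochhammer ℝ (n+1)).eval (γ + m₀) := by
        rw [div_le_div_iff₀ hPm hPm₀, one_mul, div_mul_eq_mul_div, le_div_iff₀ hpos_m]
        nlinarith [hcomp]
      have hfac : (0:ℝ) < (n+1).factorial := by positivity
      have key : ∀ u : ℝ, 0 ≤ u →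
          u / (ascPochhammer ℝ (n+1)).eval (γ + m) ≤
            (γ + m₀) / (γ + m) * (u / (ascPochhammer ℝ (n+1)).eval (γ + m₀)) := by
        intro u hu
        calc u / (ascPochhammer ℝ (n+1)).eval (γ + m)
            = u * (1 / (ascPochhammer ℝ (n+1)).eval (γ + m)) := by ring
          _ ≤ u * (((γ + m₀) / (γ + m)) / (ascPochhammer ℝ (n+1)).eval (γ + m₀)) :=
              mul_le_mul_of_nonneg_left hfrac hu
          _ = (γ + m₀) / (γ + m) * (u / (ascPochhammer ℝ (n+1)).eval (γ + m₀)) := by ring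
      have habs_eq : ∀ x : ℝ, 0 < (ascPochhammer ℝ (n+1)).eval x →
          |hcoef α β x (n+1)| =
            (|(ascPochhammer ℝ (n+1)).eval α * (ascPochhammer ℝ (n+1)).eval β| /
              ((n+1).factorial : ℝ)) / (ascPochhammer ℝ (n+1)).eval x := by
        intro x hx
        unfold hcoef
        rw [abs_div, abs_div, abs_of_pos hx, Nat.abs_cast]
        ring
      rw [habs_eq _ hPm, habs_eq _ hPm₀]
      exact key _ (by positivity)
    -- sum up
    have he : hsum α β (γ + m) - 1 = ∑' n : ℕ, hcoef α β (γ + m) (n+1) := by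
      rw [hsum, Summable.tsum_eq_zero_add hsm, hcoef_zero]
      ring
    rw [Real.norm_eq_abs, he]
    calc |∑' n : ℕ, hcoef α β (γ + m) (n+1)|
        ≤ ∑' n : ℕ, |hcoef α β (γ + m) (n+1)| := by
          have h' : Summable fun n : ℕ => ‖hcoef α β (γ + m) (n+1)‖ := by
            simpa [Real.norm_eq_abs] using habsm'
          have := norm_tsum_le_tsum_norm h'
          simpa [Real.norm_eq_abs] using this
      _ ≤ ∑' n : ℕ, (γ + m₀) / (γ + m) * |hcoef α β (γ + m₀) (n+1)| :=
          Summable.tsum_le_tsum hptw habsm' (habs₀'.mul_left _)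
      _ = (γ + m₀) / (γ + m) * (∑' n : ℕ, |hcoef α β (γ + m₀) (n+1)|) := tsum_mul_left
      _ = ((γ + m₀) * (∑' n : ℕ, |hcoef α β (γ + m₀) (n+1)|)) * (γ + (m:ℝ))⁻¹ := by ring
  have hzero : Tendsto (fun m : ℕ => hsum α β (γ + m) - 1) atTop (𝓝 0) :=
    squeeze_zero_norm' hbound hg
  have := hzero.add_const 1
  simpa using this

lemma hsum_value (α β γ : ℝ) (hγ : ∀ m : ℕ, γ ≠ -m) (h : 0 < γ - α - β) :
    hsum α β γ = Real.Gamma γ * Real.Gamma (γ - α - β) /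
      (Real.Gamma (γ - α) * Real.Gamma (γ - β)) := by
  have hδ : (0:ℝ) < γ - α - β := h
  have hPγ : ∀ m : ℕ, (ascPochhammer ℝ m).eval γ ≠ 0 := poch_ne_zero hγ
  have hPδ : ∀ m : ℕ, (0:ℝ) < (ascPochhammer ℝ m).eval (γ - α - β) := poch_pos hδ
  -- the constant identity : hsum α β (γ+m) * R m = hsum α β γ
  have hconst : ∀ m : ℕ,
      hsum α β (γ + m) * ((ascPochhammer ℝ m).eval (γ - α) * (ascPochhammer ℝ m).eval (γ - β) /
        ((ascPochhammer ℝ m).eval γ * (ascPochhammer ℝ m).eval (γ - α - β))) = hsum α β γ := by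
    intro m
    have hiter := hsum_iter α β γ hγ h m
    rw [mul_div_assoc', div_eq_iff (mul_ne_zero (hPγ m) (hPδ m).ne')]
    linear_combination -hiter
  by_cases hA : ∀ j : ℕ, γ - α ≠ -j
  · by_cases hB : ∀ j : ℕ, γ - β ≠ -j
    · -- nondegenerate case
      have hratio : ∀ m : ℕ, 0 < m →
          (ascPochhammer ℝ (m+1)).eval (γ - α) * (ascPochhammer ℝ (m+1)).eval (γ - β) /
            ((ascPochhammer ℝ (m+1)).eval γ * (ascPochhammer ℝ (m+1)).eval (γ - α - β)) =
          Real.GammaSeq γ m * Real.GammaSeq (γ - α - β) m /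
            (Real.GammaSeq (γ - α) m * Real.GammaSeq (γ - β) m) := by
        intro m hm
        have hmR : (0:ℝ) < m := by exact_mod_cast hm
        have hfac : ((m.factorial : ℝ)) ≠ 0 := by exact_mod_cast m.factorial_ne_zero
        have hp1 : ((m:ℝ)) ^ γ ≠ 0 := (Real.rpow_pos_of_pos hmR γ).ne'
        have hp2 : ((m:ℝ)) ^ (γ - α - β) ≠ 0 := (Real.rpow_pos_of_pos hmR _).ne'
        have hp3 : ((m:ℝ)) ^ (γ - α) ≠ 0 := (Real.rpow_pos_of_pos hmR _).ne'
        have hp4 : ((m:ℝ)) ^ (γ - β) ≠ 0 := (Real.rpow_pos_of_pos hmR _).ne'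
        have hq1 := hPγ (m+1)
        have hq2 := (hPδ (m+1)).ne'
        have hq3 := poch_ne_zero hA (m+1)
        have hq4 := poch_ne_zero hB (m+1)
        have hpw : (m:ℝ) ^ γ * (m:ℝ) ^ (γ - α - β) = (m:ℝ) ^ (γ - α) * (m:ℝ) ^ (γ - β) := by
          rw [← Real.rpow_add hmR, ← Real.rpow_add hmR]
          ring_nf
        rw [Real.GammaSeq, Real.GammaSeq, Real.GammaSeq, Real.GammaSeq,
          ← poch_prod, ← poch_prod, ← poch_prod, ← poch_prod]
        field_simp
        linear_combination -hpw
      set L := Real.Gamma γ * Real.Gamma (γ - α - β) /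
        (Real.Gamma (γ - α) * Real.Gamma (γ - β)) with hL
      have hGne : Real.Gamma (γ - α) * Real.Gamma (γ - β) ≠ 0 :=
        mul_ne_zero (Real.Gamma_ne_zero hA) (Real.Gamma_ne_zero hB)
      have hGlim : Tendsto (fun m : ℕ => Real.GammaSeq γ m * Real.GammaSeq (γ - α - β) m /
          (Real.GammaSeq (γ - α) m * Real.GammaSeq (γ - β) m)) atTop (𝓝 L) :=
        ((Real.GammaSeq_tendsto_Gamma γ).mul (Real.GammaSeq_tendsto_Gamma (γ - α - β))).div
          ((Real.GammaSeq_tendsto_Gamma (γ - α)).mul (Real.GammaSeq_tendsto_Gamma (γ - β))) hGne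
      have hRlim : Tendsto (fun m : ℕ =>
          (ascPochhammer ℝ m).eval (γ - α) * (ascPochhammer ℝ m).eval (γ - β) /
            ((ascPochhammer ℝ m).eval γ * (ascPochhammer ℝ m).eval (γ - α - β)))
          atTop (𝓝 L) := by
        rw [← tendsto_add_atTop_iff_nat 1]
        apply hGlim.congr'
        filter_upwards [eventually_gt_atTop 0] with m hm
        exact (hratio m hm).symm
      have hmain : Tendsto (fun m : ℕ => hsum α β (γ + m) *
          ((ascPochhammer ℝ m).eval (γ - α) * (ascPochhammer ℝ m).eval (γ - β) /
            ((ascPochhammer ℝ m).eval γ * (ascPochhammer ℝ m).eval (γ - α - β))))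
          atTop (𝓝 (1 * L)) :=
        (hsum_shift_tendsto_one α β γ hγ h).mul hRlim
      have hconst' : Tendsto (fun _ : ℕ => hsum α β γ) atTop (𝓝 (1 * L)) := by
        apply hmain.congr
        intro m
        exact hconst m
      have := tendsto_nhds_unique hconst' tendsto_const_nhds
      rw [← this, one_mul]
    · -- γ - β is a nonpositive integer
      push_neg at hB
      obtain ⟨k, hk⟩ := hB
      have hzero : hsum α β γ = 0 := by
        have hiter := hsum_iter α β γ hγ h (k+1)
        rw [poch_eval_neg_nat hk (Nat.lt_succ_self k)] at hiter
        simp only [mul_zero, zero_mul] at hiter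
        have hne := mul_ne_zero (hPγ (k+1)) (hPδ (k+1)).ne'
        rcases mul_eq_zero.mp hiter with h0 | h0
        · exact h0
        · exact absurd h0 hne
      rw [hzero, hk, Real.Gamma_neg_nat_eq_zero, mul_zero, div_zero]
  · -- γ - α is a nonpositive integer
    push_neg at hA
    obtain ⟨k, hk⟩ := hA
    have hzero : hsum α β γ = 0 := by
      have hiter := hsum_iter α β γ hγ h (k+1)
      rw [poch_eval_neg_nat hk (Nat.lt_succ_self k)] at hiter
      simp only [mul_zero, zero_mul] at hiter
      have hne := mul_ne_zero (hPγ (k+1)) (hPδ (k+1)).ne'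
      rcases mul_eq_zero.mp hiter with h0 | h0
      · exact h0
      · exact absurd h0 hne
    rw [hzero, hk, Real.Gamma_neg_nat_eq_zero, zero_mul, div_zero]

theorem stmt_3 (α β γ : ℝ) (hγ : ∀ m : ℕ, γ ≠ -(m : ℝ)) (h : 0 < γ - α - β) :
    Tendsto (fun z => hypF α β γ z) (nhdsWithin 1 (Set.Iio 1))
      (nhds (Real.Gamma γ * Real.Gamma (γ - α - β) /
        (Real.Gamma (γ - α) * Real.Gamma (γ - β)))) := by
  rw [← hsum_value α β γ hγ h]
  have hfe : ∀ (z : ℝ) (k : ℕ),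
      (ascPochhammer ℝ k).eval α * (ascPochhammer ℝ k).eval β /
        (ascPochhammer ℝ k).eval γ * z ^ k / (Nat.factorial k)
        = hcoef α β γ k * z ^ k := by
    intro z k
    unfold hcoef
    ring
  have hmain : Tendsto (fun z => ∑' k : ℕ, hcoef α β γ k * z ^ k) (nhdsWithin 1 (Set.Iio 1))
      (𝓝 (∑' k : ℕ, hcoef α β γ k)) := by
    have hb := (hcoef_decay α β γ hγ h).2
    have hcong : ∀ k : ℕ, hcoef α β γ k = hcoef α β γ k * (1:ℝ) ^ k := by
      intro k; rw [one_pow, mul_one]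
    rw [tsum_congr hcong]
    apply tendsto_tsum_of_dominated_convergence hb
    · intro k
      exact (((continuous_const.mul (continuous_pow k)).tendsto 1).mono_left
        nhdsWithin_le_nhds)
    · filter_upwards [Ioo_mem_nhdsLT_of_mem (Set.mem_Ioc.mpr ⟨zero_lt_one, le_refl (1:ℝ)⟩)]
        with z hz k
      rw [Real.norm_eq_abs, abs_mul, abs_pow]
      have hzk : |z| ^ k ≤ 1 :=
        pow_le_one₀ (abs_nonneg z) (by rw [abs_of_pos hz.1]; exact hz.2.le)
      nlinarith [abs_nonneg (hcoef α β γ k), pow_nonneg (abs_nonneg z) k]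
  have hsum_eq : hsum α β γ = ∑' k : ℕ, hcoef α β γ k := rfl
  rw [hsum_eq]
  apply hmain.congr
  intro z
  unfold hypF
  exact tsum_congr fun k => (hfe z k).symm
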